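/- Let F, G, H be three times differentiable distribution functions with strictly positive densities on the interiors of their supports, with F ≤₃ G and G ≤₃ H. If there exists p₀ ∈ (0,1) such that R_{FG}''(t) ≤ 0 for t ≤ F^{-1}(p₀), R_{FG}''(t) ≥ 0 for t ≥ F^{-1}(p₀), R_{GH}''(s) ≤ 0 for s ≤ G^{-1}(p₀), and R_{GH}''(s) ≥ 0 for s ≥ G^{-1}(p₀), then F ≤₃ H. -/

import Mathlib

/-- A three times differentiable distribution function with interval support
and strictly positive density on the interior `D` of its support, together
with its inverse (= quantile function) `inv : (0,1) → D`. -/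
structure CDF where
  /-- the distribution function -/
  F : ℝ → ℝ
  /-- the interior of the support, an open interval -/
  D : Set ℝ
  /-- the inverse (quantile) function -/
  inv : ℝ → ℝ
  isOpen : IsOpen D
  ordConn : D.OrdConnected
  nonempty : D.Nonempty
  smooth : ContDiffOn ℝ 3 F D
  smooth_inv : ContDiffOn ℝ 3 inv (Set.Ioo 0 1)
  density_pos : ∀ x ∈ D, 0 < deriv F x
  mapsTo : Set.MapsTo F D (Set.Ioo 0 1)
  inv_mapsTo : Set.MapsTo inv (Set.Ioo 0 1) D
  left_inv : ∀ x ∈ D, inv (F x) = x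
  right_inv : ∀ p ∈ Set.Ioo (0:ℝ) 1, F (inv p) = p

/-- `R_{FG} = G⁻¹ ∘ F`. -/
def R (F G : CDF) : ℝ → ℝ := fun x => G.inv (F.F x)

/-- the kurtosis order `F ≤₃ G` : the third derivative of `R_{FG}` is
nonnegative on the interior of the support of `F`. -/
def le3 (F G : CDF) : Prop := ∀ t ∈ F.D, 0 ≤ deriv (deriv (deriv (R F G))) t

private lemma diffAt_of_cd {n : ℕ} {f : ℝ → ℝ} {s : Set ℝ} (hs : IsOpen s)
    (hf : ContDiffOn ℝ n f s) (hn : 1 ≤ n) {x : ℝ} (hx : x ∈ s) :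
    DifferentiableAt ℝ f x :=
  (hf.differentiableOn (by exact_mod_cast (show n ≠ 0 by omega))).differentiableAt (hs.mem_nhds hx)

private lemma third_deriv_comp {f g : ℝ → ℝ} {s u : Set ℝ} (hs : IsOpen s) (hu : IsOpen u)
    (hf : ContDiffOn ℝ 3 f s) (hg : ContDiffOn ℝ 3 g u) (hmap : Set.MapsTo f s u)
    {x : ℝ} (hx : x ∈ s) :
    deriv (deriv (deriv (g ∘ f))) x =
      deriv (deriv (deriv g)) (f x) * (deriv f x) ^ 3
      + 3 * deriv (deriv g) (f x) * deriv f x * deriv (deriv f) x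
      + deriv g (f x) * deriv (deriv (deriv f)) x := by
  have hf1 : ContDiffOn ℝ 2 (deriv f) s := hf.deriv_of_isOpen hs (by norm_num)
  have hf2 : ContDiffOn ℝ 1 (deriv (deriv f)) s := hf1.deriv_of_isOpen hs (by norm_num)
  have hg1 : ContDiffOn ℝ 2 (deriv g) u := hg.deriv_of_isOpen hu (by norm_num)
  have hg2 : ContDiffOn ℝ 1 (deriv (deriv g)) u := hg1.deriv_of_isOpen hu (by norm_num)
  have Df : ∀ y ∈ s, DifferentiableAt ℝ f y := fun y hy => diffAt_of_cd hs hf (by norm_num) hy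
  have Df1 : ∀ y ∈ s, DifferentiableAt ℝ (deriv f) y :=
    fun y hy => diffAt_of_cd hs hf1 (by norm_num) hy
  have Df2 : ∀ y ∈ s, DifferentiableAt ℝ (deriv (deriv f)) y :=
    fun y hy => diffAt_of_cd hs hf2 (by norm_num) hy
  have Dg : ∀ z ∈ u, DifferentiableAt ℝ g z := fun z hz => diffAt_of_cd hu hg (by norm_num) hz
  have Dg1 : ∀ z ∈ u, DifferentiableAt ℝ (deriv g) z :=
    fun z hz => diffAt_of_cd hu hg1 (by norm_num) hz
  have Dg2 : ∀ z ∈ u, DifferentiableAt ℝ (deriv (deriv g)) z :=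
    fun z hz => diffAt_of_cd hu hg2 (by norm_num) hz
  -- first derivative
  have e1 : Set.EqOn (deriv (g ∘ f)) (fun y => deriv g (f y) * deriv f y) s :=
    fun y hy => deriv_comp y (Dg _ (hmap hy)) (Df y hy)
  -- second derivative
  have e2 : Set.EqOn (deriv (deriv (g ∘ f)))
      (fun y => deriv (deriv g) (f y) * deriv f y * deriv f y
        + deriv g (f y) * deriv (deriv f) y) s := by
    intro y hy
    have h1 : deriv (g ∘ f) =ᶠ[nhds y] fun z => deriv g (f z) * deriv f z :=
      Filter.eventuallyEq_of_mem (hs.mem_nhds hy) e1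
    have hgc : DifferentiableAt ℝ (fun z => deriv g (f z)) y :=
      (Dg1 _ (hmap hy)).comp y (Df y hy)
    have := h1.deriv_eq
    rw [this, deriv_fun_mul hgc (Df1 y hy),
      show deriv (fun z => deriv g (f z)) y = deriv (deriv g) (f y) * deriv f y from
        deriv_comp y (Dg1 _ (hmap hy)) (Df y hy)]
  -- third derivative at x
  have h2 : deriv (deriv (g ∘ f)) =ᶠ[nhds x]
      fun y => deriv (deriv g) (f y) * deriv f y * deriv f y
        + deriv g (f y) * deriv (deriv f) y :=
    Filter.eventuallyEq_of_mem (hs.mem_nhds hx) e2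
  rw [h2.deriv_eq]
  have hA : DifferentiableAt ℝ (fun y => deriv (deriv g) (f y)) x :=
    (Dg2 _ (hmap hx)).comp x (Df x hx)
  have hB : DifferentiableAt ℝ (deriv f) x := Df1 x hx
  have hC : DifferentiableAt ℝ (fun y => deriv g (f y)) x :=
    (Dg1 _ (hmap hx)).comp x (Df x hx)
  have hD : DifferentiableAt ℝ (deriv (deriv f)) x := Df2 x hx
  rw [deriv_fun_add ((hA.fun_mul hB).fun_mul hB) (hC.fun_mul hD), deriv_fun_mul (hA.fun_mul hB) hB,
    deriv_fun_mul hA hB, deriv_fun_mul hC hD,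
    show deriv (fun y => deriv (deriv g) (f y)) x = deriv (deriv (deriv g)) (f x) * deriv f x from
      deriv_comp x (Dg2 _ (hmap hx)) (Df x hx),
    show deriv (fun y => deriv g (f y)) x = deriv (deriv g) (f x) * deriv f x from
      deriv_comp x (Dg1 _ (hmap hx)) (Df x hx)]
  ring

private lemma CDF.inv_deriv_pos (G : CDF) {p : ℝ} (hp : p ∈ Set.Ioo (0:ℝ) 1) :
    0 < deriv G.inv p := by
  have hx : G.inv p ∈ G.D := G.inv_mapsTo hp
  have hFd : DifferentiableAt ℝ G.F (G.inv p) := diffAt_of_cd G.isOpen G.smooth (by norm_num) hx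
  have hId : DifferentiableAt ℝ G.inv p := diffAt_of_cd isOpen_Ioo G.smooth_inv (by norm_num) hp
  have he : (G.F ∘ G.inv) =ᶠ[nhds p] id :=
    Filter.eventuallyEq_of_mem (isOpen_Ioo.mem_nhds hp) fun q hq => G.right_inv q hq
  have h1 : deriv G.F (G.inv p) * deriv G.inv p = 1 := by
    rw [← deriv_comp p hFd hId, he.deriv_eq, deriv_id]
  have h2 : 0 < deriv G.F (G.inv p) := G.density_pos _ hx
  nlinarith

private lemma R_cd (F G : CDF) : ContDiffOn ℝ 3 (R F G) F.D :=
  G.smooth_inv.comp F.smooth F.mapsTo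

private lemma R_mapsTo (F G : CDF) : Set.MapsTo (R F G) F.D G.D :=
  fun _ ht => G.inv_mapsTo (F.mapsTo ht)

private lemma R_deriv_pos (F G : CDF) {t : ℝ} (ht : t ∈ F.D) : 0 < deriv (R F G) t := by
  have h1 : DifferentiableAt ℝ G.inv (F.F t) :=
    diffAt_of_cd isOpen_Ioo G.smooth_inv (by norm_num) (F.mapsTo ht)
  have h2 : DifferentiableAt ℝ F.F t := diffAt_of_cd F.isOpen F.smooth (by norm_num) ht
  rw [show R F G = G.inv ∘ F.F from rfl, deriv_comp t h1 h2]
  exact mul_pos (G.inv_deriv_pos (F.mapsTo ht)) (F.density_pos _ ht)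

private lemma R_strictMono (F G : CDF) : StrictMonoOn (R F G) F.D := by
  apply strictMonoOn_of_deriv_pos (convex_iff_ordConnected.mpr F.ordConn)
    ((R_cd F G).continuousOn)
  intro x hx
  rw [F.isOpen.interior_eq] at hx
  exact R_deriv_pos F G hx

/-- If `F ≤₃ G`, `G ≤₃ H` and there is a common inflection value
`p₀ ∈ (0,1)` (i.e. `R_{FG}''` changes sign from `-` to `+` at `F⁻¹(p₀)` and
`R_{GH}''` does so at `G⁻¹(p₀)`), then `F ≤₃ H`. -/
theorem stmt2 (F G H : CDF) (h1 : le3 F G) (h2 : le3 G H)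
    (p₀ : ℝ) (hp₀ : p₀ ∈ Set.Ioo (0:ℝ) 1)
    (hFG1 : ∀ t ∈ F.D, t ≤ F.inv p₀ → deriv (deriv (R F G)) t ≤ 0)
    (hFG2 : ∀ t ∈ F.D, F.inv p₀ ≤ t → 0 ≤ deriv (deriv (R F G)) t)
    (hGH1 : ∀ s ∈ G.D, s ≤ G.inv p₀ → deriv (deriv (R G H)) s ≤ 0)
    (hGH2 : ∀ s ∈ G.D, G.inv p₀ ≤ s → 0 ≤ deriv (deriv (R G H)) s) :
    le3 F H := by
  intro t ht
  set f := R F G with hf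
  set g := R G H with hg
  have hcomp : Set.EqOn (R F H) (g ∘ f) F.D := by
    intro x hx
    simp only [R, hg, hf, Function.comp_apply]
    rw [G.right_inv _ (F.mapsTo hx)]
  have h0 : R F H =ᶠ[nhds t] g ∘ f :=
    Filter.eventuallyEq_of_mem (F.isOpen.mem_nhds ht) hcomp
  rw [(h0.deriv.deriv).deriv_eq,
    third_deriv_comp F.isOpen G.isOpen (R_cd F G) (R_cd G H) (R_mapsTo F G) ht]
  have hft : f t ∈ G.D := R_mapsTo F G ht
  have h3g : 0 ≤ deriv (deriv (deriv g)) (f t) := h2 _ hft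
  have h3f : 0 ≤ deriv (deriv (deriv f)) t := h1 t ht
  have hf1 : 0 < deriv f t := R_deriv_pos F G ht
  have hg1 : 0 < deriv g (f t) := R_deriv_pos G H hft
  have hinvF : F.inv p₀ ∈ F.D := F.inv_mapsTo hp₀
  have hval : f (F.inv p₀) = G.inv p₀ := by
    simp only [hf, R]
    rw [F.right_inv _ hp₀]
  have hmid : 0 ≤ deriv (deriv g) (f t) * deriv (deriv f) t := by
    rcases le_total t (F.inv p₀) with hle | hle
    · have h2f : deriv (deriv f) t ≤ 0 := hFG1 t ht hle
      have hle' : f t ≤ G.inv p₀ := by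
        rw [← hval]
        exact ((R_strictMono F G).le_iff_le ht hinvF).mpr hle
      have h2g : deriv (deriv g) (f t) ≤ 0 := hGH1 _ hft hle'
      nlinarith

    · have h2f : 0 ≤ deriv (deriv f) t := hFG2 t ht hle
      have hle' : G.inv p₀ ≤ f t := by
        rw [← hval]
        exact ((R_strictMono F G).le_iff_le hinvF ht).mpr hle
      have h2g : 0 ≤ deriv (deriv g) (f t) := hGH2 _ hft hle'
      exact mul_nonneg h2g h2f
  nlinarith [mul_nonneg h3g (pow_nonneg hf1.le 3), mul_nonneg hf1.le hmid,
    mul_nonneg hg1.le h3f]
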